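/- (Corollary 2: fast storage forces inexactness.) Consider the storage scheduling LP with η < 1 and at least one time period with strictly negative price. Suppose the storage is so fast that ρ·S_lb + Δt·η^C·P^C_max > S_ub and ρ·S_ub − Δt·(1/η^D)·P^D_max < S_lb. Then every optimal solution of the LP exhibits simultaneous charge and discharge at every time period t with C_t < 0. -/
import Mathlib


open Finset

def feasible (T : ℕ) (Δt ρ ηC ηD Slb Sub Sinit PC PD : ℝ)
    (s pC pD : ℕ → ℝ) : Prop :=
  s 0 = Sinit ∧
  (∀ t ∈ Icc 1 T, s t = ρ * s (t - 1) + Δt * (ηC * pC t - (1 / ηD) * pD t)) ∧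
  (∀ t ∈ Icc 1 T, Slb ≤ s t ∧ s t ≤ Sub) ∧
  (∀ t ∈ Icc 1 T, 0 ≤ pC t ∧ pC t ≤ PC) ∧
  (∀ t ∈ Icc 1 T, 0 ≤ pD t ∧ pD t ≤ PD)

def objective (T : ℕ) (Δt : ℝ) (C : ℕ → ℝ) (pC pD : ℕ → ℝ) : ℝ :=
  ∑ t ∈ Icc 1 T, Δt * C t * (pD t - pC t)

def optimal (T : ℕ) (Δt ρ ηC ηD Slb Sub Sinit PC PD : ℝ) (C : ℕ → ℝ)
    (s pC pD : ℕ → ℝ) : Prop :=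
  feasible T Δt ρ ηC ηD Slb Sub Sinit PC PD s pC pD ∧
  ∀ s' pC' pD', feasible T Δt ρ ηC ηD Slb Sub Sinit PC PD s' pC' pD' →
    objective T Δt C pC' pD' ≤ objective T Δt C pC pD

theorem stmt8 (T : ℕ) (Δt ρ ηC ηD Slb Sub Sinit PC PD : ℝ) (C : ℕ → ℝ)
    (hΔt : 0 < Δt) (hρ0 : 0 < ρ) (hρ1 : ρ ≤ 1)
    (hηC0 : 0 < ηC) (hηC1 : ηC ≤ 1) (hηD0 : 0 < ηD) (hηD1 : ηD ≤ 1)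
    (hη : ηC * ηD < 1)
    (hS0 : 0 ≤ Slb) (hS : Slb < Sub) (hPC : 0 < PC) (hPD : 0 < PD)
    (hinit0 : Slb ≤ Sinit) (hinit1 : Sinit ≤ Sub)
    (hneg : ∃ t ∈ Icc 1 T, C t < 0)
    (hfastC : Sub < ρ * Slb + Δt * ηC * PC)
    (hfastD : ρ * Sub - Δt * (1 / ηD) * PD < Slb) :
    ∀ s pC pD : ℕ → ℝ,
      optimal T Δt ρ ηC ηD Slb Sub Sinit PC PD C s pC pD →
      ∀ t ∈ Icc 1 T, C t < 0 → 0 < pC t ∧ 0 < pD t := by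
  intro s pC pD hopt t ht hCt
  obtain ⟨⟨hs0, hdyn, hsb, hpCb, hpDb⟩, hbest⟩ := hopt
  have ht' := Finset.mem_Icc.mp ht
  have hηD : (ηD : ℝ) ≠ 0 := ne_of_gt hηD0
  -- bounds on s (t-1)
  have hsprev : Slb ≤ s (t - 1) ∧ s (t - 1) ≤ Sub := by
    rcases Nat.lt_or_ge 1 t with h | h
    · exact hsb (t - 1) (Finset.mem_Icc.mpr
        ⟨Nat.le_sub_one_of_lt h, le_trans (Nat.sub_le t 1) ht'.2⟩)
    · have htt : t = 1 := le_antisymm h ht'.1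
      subst htt
      simpa [hs0] using And.intro hinit0 hinit1
  have hdyn_t := hdyn t ht
  -- key claim: pC t = PC ∨ pD t = PD
  have hkey : pC t = PC ∨ pD t = PD := by
    by_contra hcon
    push_neg at hcon
    have hpC : pC t < PC := lt_of_le_of_ne (hpCb t ht).2 hcon.1
    have hpD : pD t < PD := lt_of_le_of_ne (hpDb t ht).2 hcon.2
    have hη0 : (0 : ℝ) < ηC * ηD := mul_pos hηC0 hηD0
    set ε := min (PC - pC t) ((PD - pD t) / (ηC * ηD)) with hεdef
    have hε0 : 0 < ε := lt_min (by linarith) (div_pos (by linarith) hη0)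
    have hε1 : ε ≤ PC - pC t := min_le_left _ _
    have hε2 : (ηC * ηD) * ε ≤ PD - pD t := by
      have := min_le_right (PC - pC t) ((PD - pD t) / (ηC * ηD))
      calc (ηC * ηD) * ε ≤ (ηC * ηD) * ((PD - pD t) / (ηC * ηD)) := by
            exact mul_le_mul_of_nonneg_left this hη0.le
        _ = PD - pD t := by field_simp
    set pC' := Function.update pC t (pC t + ε) with hpC'
    set pD' := Function.update pD t (pD t + (ηC * ηD) * ε) with hpD'
    have hfeas' : feasible T Δt ρ ηC ηD Slb Sub Sinit PC PD s pC' pD' := by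
      refine ⟨hs0, ?_, hsb, ?_, ?_⟩
      · intro x hx
        by_cases hxt : x = t
        · subst hxt
          have heq : ηC * (pC x + ε) - 1 / ηD * (pD x + ηC * ηD * ε)
              = ηC * pC x - 1 / ηD * pD x := by
            field_simp
            ring
          rw [hpC', hpD', Function.update_self, Function.update_self, heq]
          exact hdyn_t
        · rw [hpC', hpD', Function.update_of_ne hxt, Function.update_of_ne hxt]
          exact hdyn x hx
      · intro x hx
        by_cases hxt : x = t
        · subst hxt
          rw [hpC', Function.update_self]
          constructor
          · linarith [(hpCb x hx).1]
          · linarith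
        · rw [hpC', Function.update_of_ne hxt]; exact hpCb x hx
      · intro x hx
        by_cases hxt : x = t
        · subst hxt
          rw [hpD', Function.update_self]
          constructor
          · nlinarith [(hpDb x hx).1]
          · linarith
        · rw [hpD', Function.update_of_ne hxt]; exact hpDb x hx
    have hle := hbest s pC' pD' hfeas'
    -- compute objective difference
    have hobj : objective T Δt C pC' pD' =
        objective T Δt C pC pD + Δt * C t * ((ηC * ηD) * ε - ε) := by
      unfold objective
      rw [← Finset.add_sum_erase _ _ ht, ← Finset.add_sum_erase _ _ ht]
      have hrest : ∑ x ∈ (Icc 1 T).erase t, Δt * C x * (pD' x - pC' x) =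
          ∑ x ∈ (Icc 1 T).erase t, Δt * C x * (pD x - pC x) := by
        refine Finset.sum_congr rfl ?_
        intro x hx
        have hxt := Finset.ne_of_mem_erase hx
        rw [hpC', hpD', Function.update_of_ne hxt, Function.update_of_ne hxt]
      rw [hrest, hpC', hpD', Function.update_self, Function.update_self]
      ring
    have hpos : 0 < Δt * C t * ((ηC * ηD) * ε - ε) := by
      have h1 : (ηC * ηD) * ε - ε < 0 := by nlinarith
      have h2 : Δt * C t < 0 := mul_neg_of_pos_of_neg hΔt hCt
      exact mul_pos_of_neg_of_neg h2 h1
    linarith [hle, hobj.symm.le]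
  -- conclude from the fast-storage conditions
  rcases hkey with hPCeq | hPDeq
  · refine ⟨by rw [hPCeq]; exact hPC, ?_⟩
    have h1 : s t ≤ Sub := (hsb t ht).2
    have h2 : ρ * Slb ≤ ρ * s (t - 1) := mul_le_mul_of_nonneg_left hsprev.1 hρ0.le
    have hexp : Δt * (ηC * PC - 1 / ηD * pD t)
        = Δt * ηC * PC - Δt * (1 / ηD) * pD t := by ring
    have h3 : 0 < Δt * (1 / ηD) * pD t := by
      rw [hPCeq] at hdyn_t
      linarith [h1, h2, hfastC, hdyn_t, hexp]
    have h4 : 0 < Δt * (1 / ηD) := mul_pos hΔt (by positivity)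
    nlinarith [h3, h4]
  · refine ⟨?_, by rw [hPDeq]; exact hPD⟩
    have h1 : Slb ≤ s t := (hsb t ht).1
    have h2 : ρ * s (t - 1) ≤ ρ * Sub := mul_le_mul_of_nonneg_left hsprev.2 hρ0.le
    have hexp : Δt * (ηC * pC t - 1 / ηD * PD)
        = Δt * ηC * pC t - Δt * (1 / ηD) * PD := by ring
    have h3 : 0 < Δt * ηC * pC t := by
      rw [hPDeq] at hdyn_t
      linarith [h1, h2, hfastD, hdyn_t, hexp]
    have h4 : 0 < Δt * ηC := mul_pos hΔt hηC0
    nlinarith [h3, h4]
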